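/- A locally quasi-convex abelian topological group (G,τ) is pre-Mackey if and only if for every pair of locally quasi-convex group topologies τ₁ and τ₂ on G that are compatible with τ, the supremum topology τ₁ ∨ τ₂ is also compatible with τ. -/

import Mathlib

open Filter Topology

noncomputable section

/-- `𝕊₊ = {z ∈ 𝕊 : Re z ≥ 0}`. -/
def SPlus : Set Circle := {z : Circle | 0 ≤ (z : ℂ).re}

/-- A character of an abelian group `G` is a homomorphism `G → 𝕊`. -/
def IsChar {G : Type*} [AddCommGroup G] (χ : G → Circle) : Prop :=
  ∀ x y : G, χ (x + y) = χ x * χ y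

/-- Two topologies on an abelian group `G` are *compatible* if they have the same
continuous characters `G → 𝕊`. -/
def Compatible {G : Type*} [AddCommGroup G] (t₁ t₂ : TopologicalSpace G) : Prop :=
  ∀ χ : G → Circle, IsChar χ →
    (@Continuous G Circle t₁ _ χ ↔ @Continuous G Circle t₂ _ χ)

/-- A subset `A` of a topological abelian group is *quasi-convex* if for every `g ∉ A`
there is a continuous character `χ` with `χ(A) ⊆ 𝕊₊` and `χ(g) ∉ 𝕊₊`. -/
def IsQuasiConvex {G : Type*} [AddCommGroup G] (t : TopologicalSpace G) (A : Set G) : Prop :=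
  ∀ g : G, g ∉ A → ∃ χ : G → Circle, IsChar χ ∧ @Continuous G Circle t _ χ ∧
    (∀ a ∈ A, χ a ∈ SPlus) ∧ χ g ∉ SPlus

/-- A topological abelian group is *locally quasi-convex* if it has a neighborhood base
at `0` consisting of quasi-convex sets. -/
def LocallyQuasiConvex {G : Type*} [AddCommGroup G] (t : TopologicalSpace G) : Prop :=
  ∀ U ∈ @nhds G t 0, ∃ V ∈ @nhds G t 0, V ⊆ U ∧ IsQuasiConvex t V

section Aux

open Complex Real

variable {G : Type*} [AddCommGroup G]

lemma IsChar.map_zero' {χ : G → Circle} (hχ : IsChar χ) : χ 0 = 1 := by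
  have h := hχ 0 0
  rw [add_zero] at h
  exact (left_eq_mul.mp h)

def IsChar.toHom {χ : G → Circle} (hχ : IsChar χ) : G →+ Additive Circle where
  toFun x := Additive.ofMul (χ x)
  map_zero' := congrArg Additive.ofMul hχ.map_zero'
  map_add' x y := congrArg Additive.ofMul (hχ x y)

lemma IsChar.map_nsmul' {χ : G → Circle} (hχ : IsChar χ) (n : ℕ) (x : G) :
    χ (n • x) = χ x ^ n := by
  induction n with
  | zero => simpa using hχ.map_zero'
  | succ n ih => rw [succ_nsmul, hχ, ih, pow_succ]

lemma arc_bound : ∀ (n : ℕ) (z : Circle), (∀ k ≤ n, z ^ (2^k) ∈ SPlus) →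
    |Complex.arg z| ≤ π / 2 ^ (n+1) := by
  intro n
  induction n with
  | zero =>
    intro z h
    have h0 := h 0 le_rfl
    simp only [pow_zero, pow_one] at h0
    rw [pow_one]
    exact Complex.abs_arg_le_pi_div_two_iff.2 h0
  | succ n ih =>
    intro z h
    have h0 : (0:ℝ) ≤ (z:ℂ).re := by
      have := h 0 (Nat.zero_le _); simpa [SPlus] using this
    have hz2 : (0:ℝ) ≤ ((z^2 : Circle) : ℂ).re := by
      have := h 1 (by omega)
      simpa [SPlus] using this
    have ih2 : |Complex.arg ((z^2 : Circle) : ℂ)| ≤ π / 2 ^ (n+1) := by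
      apply ih
      intro k hk
      have h1 := h (k+1) (by omega)
      have h2 : z ^ (2^(k+1)) = (z^2) ^ (2^k) := by
        rw [← pow_mul, ← pow_succ']
      rwa [h2] at h1
    have hco : ((z^2 : Circle) : ℂ) = (z:ℂ) * (z:ℂ) := by
      push_cast [sq]
      rfl
    have habs : |Complex.arg (z:ℂ)| ≤ π/2 := Complex.abs_arg_le_pi_div_two_iff.2 h0
    have hlt : |Complex.arg (z:ℂ)| < π/2 := by
      rcases lt_or_eq_of_le habs with h' | h'
      · exact h'
      exfalso
      have hcos : Real.cos (Complex.arg (z:ℂ)) = (z:ℂ).re := by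
        rw [Complex.cos_arg (Circle.coe_ne_zero z), Circle.norm_coe, div_one]
      have hcos0 : Real.cos (Complex.arg (z:ℂ)) = 0 := by
        rcases abs_eq (le_of_lt (by positivity : (0:ℝ) < π/2)) |>.mp h' with h'' | h''
        · rw [h'']; exact Real.cos_pi_div_two
        · rw [h'']; rw [Real.cos_neg]; exact Real.cos_pi_div_two
      have hre0 : (z:ℂ).re = 0 := by rw [← hcos, hcos0]
      have hnsq : (z:ℂ).re * (z:ℂ).re + (z:ℂ).im * (z:ℂ).im = 1 := by
        have := Circle.normSq_coe z
        rwa [Complex.normSq_apply] at this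
      have : ((z^2 : Circle) : ℂ).re = -1 := by
        rw [hco, Complex.mul_re, hre0]
        nlinarith
      rw [this] at hz2; linarith
    have hargsq : Complex.arg ((z^2 : Circle) : ℂ) = Complex.arg (z:ℂ) + Complex.arg (z:ℂ) := by
      rw [hco]
      apply Complex.arg_mul (Circle.coe_ne_zero z) (Circle.coe_ne_zero z)
      constructor
      · have := abs_lt.mp hlt; linarith [Real.pi_pos]
      · have := abs_lt.mp hlt; linarith [Real.pi_pos]
    rw [hargsq] at ih2
    have h2abs : |Complex.arg (z:ℂ) + Complex.arg (z:ℂ)| = 2 * |Complex.arg (z:ℂ)| := by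
      rw [← two_mul, abs_mul]
      norm_num
    rw [h2abs] at ih2
    have : π / 2 ^ (n+1+1) = (π / 2 ^ (n+1)) / 2 := by
      rw [pow_succ]; ring
    rw [this]
    linarith

lemma abs_exp_mul_I_sub_one_le (θ : ℝ) :
    ‖(Complex.exp (θ * Complex.I) - 1)‖ ≤ |θ| := by
  have h1 : Complex.exp (↑θ * Complex.I) - 1 =
      ↑(Real.cos θ - 1) + ↑(Real.sin θ) * Complex.I := by
    rw [Complex.exp_mul_I]
    push_cast
    ring
  rw [h1, ← Real.sqrt_sq_eq_abs, Complex.norm_def, Complex.normSq_add_mul_I]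
  apply Real.sqrt_le_sqrt
  have h2 := Real.sin_sq_le_sq (x := θ/2)
  have h3 : Real.sin (θ/2)^2 = 1/2 - Real.cos (2 * (θ/2)) / 2 := Real.sin_sq_eq_half_sub _
  have h4 : Real.sin θ ^ 2 + Real.cos θ ^2 = 1 := Real.sin_sq_add_cos_sq θ
  rw [show 2 * (θ/2) = θ by ring] at h3
  nlinarith

lemma dist_one_le_abs_arg (z : Circle) : dist z 1 ≤ |Complex.arg (z:ℂ)| := by
  have h1 : dist z 1 = ‖((z:ℂ) - 1)‖ := by
    show dist (z:ℂ) ((1:Circle):ℂ) = _; rw [Complex.dist_eq]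
    rfl
  have h2 : Complex.exp (↑(Complex.arg (z:ℂ)) * Complex.I) = (z:ℂ) := by
    have := Complex.norm_mul_exp_arg_mul_I (z:ℂ)
    rwa [Circle.norm_coe, Complex.ofReal_one, one_mul] at this
  have h3 := abs_exp_mul_I_sub_one_le (Complex.arg (z:ℂ))
  rw [h2] at h3
  rw [h1]
  exact h3

lemma tendsto_pi_div_pow : Tendsto (fun n : ℕ => π / 2 ^ (n+1)) atTop (𝓝 0) := by
  have h1 : Tendsto (fun n : ℕ => ((1:ℝ)/2) ^ n) atTop (𝓝 0) :=
    tendsto_pow_atTop_nhds_zero_of_lt_one (by norm_num) (by norm_num)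
  have h2 := (h1.const_mul π).comp (tendsto_add_atTop_nat 1)
  simp only [mul_zero] at h2
  convert h2 using 2 with n
  simp [Function.comp, div_pow]
  ring

lemma eq_one_of_pows_splus (z : Circle) (h : ∀ k : ℕ, z ^ (2^k) ∈ SPlus) : z = 1 := by
  have hb : ∀ n : ℕ, |Complex.arg (z:ℂ)| ≤ π / 2 ^ (n+1) := fun n =>
    arc_bound n z (fun k _ => h k)
  have h0 : |Complex.arg (z:ℂ)| ≤ 0 := ge_of_tendsto' tendsto_pi_div_pow hb
  have : Complex.arg (z:ℂ) = 0 := abs_nonpos_iff.mp h0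
  apply Circle.injective_arg
  show Complex.arg (z:ℂ) = Complex.arg ((1 : Circle):ℂ)
  rw [this, Circle.coe_one, Complex.arg_one]

end Aux

section Aux2

open Complex Real Set

variable {G : Type*} [AddCommGroup G]

lemma splus_mem_nhds_one : SPlus ∈ 𝓝 (1 : Circle) := by
  have hopen : IsOpen {z : Circle | 0 < (z:ℂ).re} :=
    isOpen_lt continuous_const (Complex.continuous_re.comp continuous_subtype_val)
  apply Filter.mem_of_superset (hopen.mem_nhds (by simp : (0:ℝ) < ((1:Circle):ℂ).re))
  intro z hz
  show (0:ℝ) ≤ (z:ℂ).re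
  exact le_of_lt hz

lemma char_preimage_mem_nhds {t : TopologicalSpace G} {χ : G → Circle} (hχ : IsChar χ)
    (hc : @Continuous G Circle t _ χ) : χ ⁻¹' SPlus ∈ @nhds G t 0 := by
  letI := t
  have h := hc.tendsto 0
  rw [hχ.map_zero'] at h
  exact h splus_mem_nhds_one

lemma char_continuous_of_mem_nhds (t : AddGroupTopology G) {χ : G → Circle} (hχ : IsChar χ)
    (h : χ ⁻¹' SPlus ∈ @nhds G t.toTopologicalSpace 0) :
    @Continuous G Circle t.toTopologicalSpace _ χ := by
  letI := t.toTopologicalSpace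
  haveI := t.toIsTopologicalAddGroup
  have key : ∀ n : ℕ, ∃ V ∈ 𝓝 (0:G), ∀ x ∈ V, ∀ k ≤ n, χ x ^ (2^k) ∈ SPlus := by
    intro n
    induction n with
    | zero =>
      refine ⟨χ ⁻¹' SPlus, h, ?_⟩
      intro x hx k hk
      have : k = 0 := Nat.le_zero.mp hk
      subst this
      simpa using hx
    | succ n ih =>
      obtain ⟨V, hV, hVp⟩ := ih
      have hcont : Continuous (fun x : G => x + x) := continuous_id.add continuous_id
      have h2 : (fun x : G => x + x) ⁻¹' V ∈ 𝓝 (0:G) := by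
        have h3 := hcont.continuousAt (x := (0:G))
        rw [ContinuousAt] at h3
        apply h3
        simpa using hV
      refine ⟨V ∩ (fun x : G => x + x) ⁻¹' V, Filter.inter_mem hV h2, ?_⟩
      rintro x ⟨hx1, hx2⟩ k hk
      match k with
      | 0 => simpa using hVp x hx1 0 (Nat.zero_le _)
      | (m+1) =>
        have hm : m ≤ n := by omega
        have h4 := hVp _ hx2 m hm
        have hxx : χ (x + x) = χ x ^ 2 := by rw [hχ, sq]
        rw [hxx, ← pow_mul] at h4
        rw [pow_succ']
        exact h4
  have key2 : ∀ n : ℕ, ∃ V ∈ 𝓝 (0:G), ∀ x ∈ V, dist (χ x) 1 ≤ π / 2 ^ (n+1) := by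
    intro n
    obtain ⟨V, hV, hVp⟩ := key n
    exact ⟨V, hV, fun x hx =>
      (dist_one_le_abs_arg _).trans (arc_bound n _ (fun k hk => hVp x hx k hk))⟩
  have hat : ContinuousAt χ 0 := by
    rw [ContinuousAt, hχ.map_zero', Metric.tendsto_nhds]
    intro ε hε
    obtain ⟨n, hn⟩ := (tendsto_pi_div_pow.eventually (gt_mem_nhds hε)).exists
    obtain ⟨V, hV, hVp⟩ := key2 n
    filter_upwards [hV] with x hx
    exact lt_of_le_of_lt (hVp x hx) hn
  exact continuous_of_continuousAt_zero hχ.toHom hat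

lemma isQuasiConvex_mono {t t' : TopologicalSpace G} (h : t ≤ t') {A : Set G}
    (hA : IsQuasiConvex t' A) : IsQuasiConvex t A := fun g hg =>
  let ⟨χ, h1, h2, h3, h4⟩ := hA g hg
  ⟨χ, h1, continuous_le_dom h h2, h3, h4⟩

lemma lqc_inf {t₁ t₂ : TopologicalSpace G} (h₁ : LocallyQuasiConvex t₁)
    (h₂ : LocallyQuasiConvex t₂) : LocallyQuasiConvex (t₁ ⊓ t₂) := by
  intro U hU
  rw [nhds_inf (t₁ := t₁) (t₂ := t₂), Filter.mem_inf_iff] at hU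
  obtain ⟨U₁, hU₁, U₂, hU₂, rfl⟩ := hU
  obtain ⟨V₁, hV₁, hV₁U, hqc₁⟩ := h₁ U₁ hU₁
  obtain ⟨V₂, hV₂, hV₂U, hqc₂⟩ := h₂ U₂ hU₂
  refine ⟨V₁ ∩ V₂, ?_, inter_subset_inter hV₁U hV₂U, ?_⟩
  · rw [nhds_inf (t₁ := t₁) (t₂ := t₂)]
    exact Filter.inter_mem_inf hV₁ hV₂
  · intro g hg
    by_cases hg1 : g ∈ V₁
    · have hg2 : g ∉ V₂ := fun hg2 => hg ⟨hg1, hg2⟩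
      obtain ⟨χ, hc1, hc2, hc3, hc4⟩ := hqc₂ g hg2
      exact ⟨χ, hc1, continuous_le_dom inf_le_right hc2,
        fun a ha => hc3 a ha.2, hc4⟩
    · obtain ⟨χ, hc1, hc2, hc3, hc4⟩ := hqc₁ g hg1
      exact ⟨χ, hc1, continuous_le_dom inf_le_left hc2,
        fun a ha => hc3 a ha.1, hc4⟩

end Aux2

/-- A locally quasi-convex abelian topological group `(G, τ)` is pre-Mackey (there is a
locally quasi-convex group topology `μ` compatible with `τ` such that every locally
quasi-convex group topology compatible with `τ` is coarser than `μ`) if and only if for all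
locally quasi-convex group topologies `τ₁, τ₂` compatible with `τ`, their supremum
`τ₁ ∨ τ₂` is compatible with `τ`.  (In Mathlib's lattice of group topologies `t ≤ s` means
`t` is finer than `s`, so the least group topology finer than both `τ₁` and `τ₂` is the
lattice-theoretic infimum `τ₁ ⊓ τ₂`, whose underlying topology is the topology generated
by the union of the two families of open sets.) -/
theorem preMackey_iff_sup_compatible {G : Type*} [AddCommGroup G] (τ : AddGroupTopology G)
    (hτ : LocallyQuasiConvex τ.toTopologicalSpace) :
    (∃ μ : AddGroupTopology G,
        LocallyQuasiConvex μ.toTopologicalSpace ∧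
        Compatible μ.toTopologicalSpace τ.toTopologicalSpace ∧
        ∀ ν : AddGroupTopology G,
          LocallyQuasiConvex ν.toTopologicalSpace →
          Compatible ν.toTopologicalSpace τ.toTopologicalSpace →
          ∀ U : Set G, IsOpen[ν.toTopologicalSpace] U → IsOpen[μ.toTopologicalSpace] U) ↔
    (∀ τ₁ τ₂ : AddGroupTopology G,
        LocallyQuasiConvex τ₁.toTopologicalSpace →
        Compatible τ₁.toTopologicalSpace τ.toTopologicalSpace →
        LocallyQuasiConvex τ₂.toTopologicalSpace →
        Compatible τ₂.toTopologicalSpace τ.toTopologicalSpace →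
        Compatible (τ₁ ⊓ τ₂).toTopologicalSpace τ.toTopologicalSpace) := by
  constructor
  · rintro ⟨μ, hμ1, hμ2, hμ3⟩ τ₁ τ₂ h1 h2 h3 h4 χ hχ
    have hle1 : μ.toTopologicalSpace ≤ τ₁.toTopologicalSpace :=
      TopologicalSpace.le_def.2 (fun U hU => hμ3 τ₁ h1 h2 U hU)
    have hle2 : μ.toTopologicalSpace ≤ τ₂.toTopologicalSpace :=
      TopologicalSpace.le_def.2 (fun U hU => hμ3 τ₂ h3 h4 U hU)
    have hinf : (τ₁ ⊓ τ₂).toTopologicalSpace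
        = τ₁.toTopologicalSpace ⊓ τ₂.toTopologicalSpace := rfl
    constructor
    · intro hc
      have hcμ : @Continuous G Circle μ.toTopologicalSpace _ χ := by
        apply continuous_le_dom (t₁ := (τ₁ ⊓ τ₂).toTopologicalSpace) _ hc
        rw [hinf]
        exact le_inf hle1 hle2
      exact (hμ2 χ hχ).1 hcμ
    · intro hc
      have hc1 : @Continuous G Circle τ₁.toTopologicalSpace _ χ := (h2 χ hχ).2 hc
      apply continuous_le_dom (t₁ := τ₁.toTopologicalSpace) _ hc1
      rw [hinf]
      exact inf_le_left
  · intro hyp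
    set S : Set (AddGroupTopology G) :=
      {ν | LocallyQuasiConvex ν.toTopologicalSpace ∧
        Compatible ν.toTopologicalSpace τ.toTopologicalSpace} with hS
    have hτS : τ ∈ S := ⟨hτ, fun χ hχ => Iff.rfl⟩
    set μ : AddGroupTopology G := sInf S with hμ
    have hmono : ∀ ν ∈ S, μ.toTopologicalSpace ≤ ν.toTopologicalSpace := fun ν hν =>
      AddGroupTopology.toTopologicalSpace_le.2 (sInf_le hν)
    have htop : μ.toTopologicalSpace
        = ⨅ ν : S, (ν : AddGroupTopology G).toTopologicalSpace := by
      rw [hμ, AddGroupTopology.toTopologicalSpace_sInf, sInf_image']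
    have hnhds : @nhds G μ.toTopologicalSpace 0
        = ⨅ ν : S, @nhds G (ν : AddGroupTopology G).toTopologicalSpace 0 := by
      rw [htop, _root_.nhds_iInf]
    -- finite infima of members of S are LQC and compatible
    have hfin : ∀ (s : Finset ↥S) (_ : s.Nonempty),
        LocallyQuasiConvex (s.inf Subtype.val).toTopologicalSpace ∧
        Compatible (s.inf Subtype.val).toTopologicalSpace τ.toTopologicalSpace := by
      intro s hs
      induction hs using Finset.Nonempty.cons_induction with
      | singleton a =>
        rw [Finset.inf_singleton]
        exact a.2
      | cons a s ha hs ih =>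
        rw [Finset.inf_cons]
        constructor
        · rw [AddGroupTopology.toTopologicalSpace_inf]
          exact lqc_inf a.2.1 ih.1
        · exact hyp a.1 (s.inf Subtype.val) a.2.1 a.2.2 ih.1 ih.2
    refine ⟨μ, ?_, ?_, ?_⟩
    · -- locally quasi-convex
      intro U hU
      rw [hnhds, Filter.mem_iInf] at hU
      obtain ⟨I, hIfin, V, hV, rfl⟩ := hU
      haveI := hIfin.fintype
      have hch : ∀ i : I, ∃ W ∈ @nhds G (i : ↥S).1.toTopologicalSpace 0,
          W ⊆ V i ∧ IsQuasiConvex (i : ↥S).1.toTopologicalSpace W :=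
        fun i => (i : ↥S).2.1 (V i) (hV i)
      choose W hW1 hW2 hW3 using hch
      have hWμ : ∀ i : I, W i ∈ @nhds G μ.toTopologicalSpace 0 := fun i => by
        rw [hnhds]
        exact Filter.mem_iInf_of_mem (i : ↥S) (hW1 i)
      refine ⟨⋂ i, W i, ?_, Set.iInter_mono hW2, ?_⟩
      · exact Filter.iInter_mem.2 hWμ
      · intro g hg
        simp only [Set.mem_iInter, not_forall] at hg
        obtain ⟨i, hgi⟩ := hg
        obtain ⟨χ, hc1, hc2, hc3, hc4⟩ := hW3 i g hgi
        exact ⟨χ, hc1, continuous_le_dom (hmono _ (i : ↥S).2) hc2,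
          fun a ha => hc3 a (Set.mem_iInter.1 ha i), hc4⟩
    · -- compatible
      intro χ hχ
      constructor
      · intro hc
        have hmem := char_preimage_mem_nhds hχ hc
        rw [hnhds, Filter.mem_iInf] at hmem
        obtain ⟨I, hIfin, V, hV, hUeq⟩ := hmem
        haveI := hIfin.fintype
        rcases isEmpty_or_nonempty ↥I with hI | hI
        · have hall : ∀ x : G, χ x ∈ SPlus := by
            intro x
            have : x ∈ χ ⁻¹' SPlus := by
              rw [hUeq]
              exact Set.mem_iInter.2 (fun i => (hI.elim i))
            exact this
          have hone : χ = fun _ => 1 := by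
            funext x
            apply eq_one_of_pows_splus
            intro k
            rw [← hχ.map_nsmul']
            exact hall _
          have hcc := @continuous_const G Circle τ.toTopologicalSpace _ (1:Circle)
          rwa [← hone] at hcc
        · set s : Finset ↥S := hIfin.toFinset with hs
          have hsne : s.Nonempty := by
            rw [hs, Set.Finite.toFinset_nonempty]
            exact Set.nonempty_coe_sort.mp hI
          set ρ : AddGroupTopology G := s.inf Subtype.val with hρ
          have hρle : ∀ i : I, ρ.toTopologicalSpace
              ≤ (i : ↥S).1.toTopologicalSpace := fun i => by
            apply AddGroupTopology.toTopologicalSpace_le.2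
            apply Finset.inf_le
            rw [hs, Set.Finite.mem_toFinset]
            exact i.2
          have hmemρ : χ ⁻¹' SPlus ∈ @nhds G ρ.toTopologicalSpace 0 := by
            rw [hUeq]
            apply Filter.iInter_mem.2
            intro i
            exact nhds_mono (hρle i) (hV i)
          have hcρ : @Continuous G Circle ρ.toTopologicalSpace _ χ :=
            char_continuous_of_mem_nhds ρ hχ hmemρ
          exact ((hfin s hsne).2 χ hχ).1 hcρ
      · intro hc
        exact continuous_le_dom (hmono τ hτS) hc
    · -- finest
      intro ν hν1 hν2 U hU
      exact hU.mono (hmono ν ⟨hν1, hν2⟩)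

end
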